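/- Let ψ : (0,∞) → (0,∞) be continuous, non-decreasing, subadditive, with ψ(t) → 0 as t → 0⁺, and suppose limsup_{t→0⁺} ψ(t)/t < ∞. Define γ(0)=0, γ(t)=ψ(t) for t>0; then γ is a modulus function, and for every measurable A ⊆ ℝ, every ψ-density point of A is a γ-density point of A. -/

import Mathlib

open MeasureTheory Set Filter Topology

/-- γ is a modulus function (on [0,∞); values and hypotheses only matter for nonnegative arguments). -/
def IsModulus (γ : ℝ → ℝ) : Prop :=
  (∀ a, 0 ≤ a → 0 ≤ γ a) ∧
  (∀ a, 0 ≤ a → (γ a = 0 ↔ a = 0)) ∧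
  (∀ a b, 0 ≤ a → 0 ≤ b → γ (a + b) ≤ γ a + γ b) ∧
  ContinuousWithinAt γ (Set.Ici 0) 0 ∧
  (∀ a b, 0 ≤ a → a ≤ b → γ a ≤ γ b)

/-- |(x-α, x+α) ∩ Aᶜ| -/
noncomputable def mInt (A : Set ℝ) (x α : ℝ) : ℝ :=
  (volume (Set.Ioo (x - α) (x + α) ∩ Aᶜ)).toReal

/-- x is a γ-density point of A. -/
def IsGammaDensityPt (γ : ℝ → ℝ) (A : Set ℝ) (x : ℝ) : Prop :=
  Tendsto (fun α => γ (mInt A x α) / γ (2 * α)) (𝓝[>] (0:ℝ)) (𝓝 0)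

/-- x is a Lebesgue density point of A. -/
def IsLebDensityPt (A : Set ℝ) (x : ℝ) : Prop :=
  Tendsto (fun α => mInt A x α / (2 * α)) (𝓝[>] (0:ℝ)) (𝓝 0)

lemma mInt_nonneg (A : Set ℝ) (x α : ℝ) : 0 ≤ mInt A x α := ENNReal.toReal_nonneg

lemma mInt_le (A : Set ℝ) (x α : ℝ) (hα : 0 < α) : mInt A x α ≤ 2 * α := by
  have h1 : volume (Set.Ioo (x - α) (x + α) ∩ Aᶜ) ≤ volume (Set.Ioo (x - α) (x + α)) :=
    measure_mono inter_subset_left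
  have h2 : volume (Set.Ioo (x - α) (x + α)) = ENNReal.ofReal (2 * α) := by
    rw [Real.volume_Ioo]; ring_nf
  have h3 : volume (Set.Ioo (x - α) (x + α) ∩ Aᶜ) ≤ ENNReal.ofReal (2 * α) := h2 ▸ h1
  calc mInt A x α ≤ (ENNReal.ofReal (2 * α)).toReal :=
        ENNReal.toReal_mono ENNReal.ofReal_ne_top h3
    _ = 2 * α := ENNReal.toReal_ofReal (by positivity)

theorem stmt13 (ψ : ℝ → ℝ)
    (hpos : ∀ t : ℝ, 0 < t → 0 < ψ t)
    (hcont : ContinuousOn ψ (Set.Ioi 0))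
    (hmono : ∀ s t : ℝ, 0 < s → s ≤ t → ψ s ≤ ψ t)
    (hsub : ∀ s t : ℝ, 0 < s → 0 < t → ψ (s + t) ≤ ψ s + ψ t)
    (hlim : Tendsto ψ (𝓝[>] (0:ℝ)) (𝓝 0))
    (hbdd : ∃ C : ℝ, 0 < C ∧ ∃ δ : ℝ, 0 < δ ∧ ∀ t : ℝ, 0 < t → t < δ → ψ t ≤ C * t) :
    IsModulus (fun t => if t ≤ 0 then 0 else ψ t) ∧
    ∀ (A : Set ℝ), MeasurableSet A → ∀ x : ℝ,
      Tendsto (fun h => mInt A x h / (2 * h * ψ (2 * h))) (𝓝[>] (0:ℝ)) (𝓝 0) →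
      IsGammaDensityPt (fun t => if t ≤ 0 then 0 else ψ t) A x := by
  set γ : ℝ → ℝ := fun t => if t ≤ 0 then 0 else ψ t with hγ
  have hγ0 : γ 0 = 0 := by simp [hγ]
  have hγpos : ∀ t, 0 < t → γ t = ψ t := fun t ht => by simp [hγ, not_le.mpr ht]
  have hnonneg : ∀ a, 0 ≤ a → 0 ≤ γ a := by
    intro a ha
    by_cases h : a ≤ 0
    · simp [hγ, h]
    · rw [hγpos a (not_le.mp h)]; exact (hpos a (not_le.mp h)).le
  constructor
  · refine ⟨hnonneg, ?_, ?_, ?_, ?_⟩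
    · intro a ha
      by_cases h : a ≤ 0
      · have : a = 0 := le_antisymm h ha
        simp [this, hγ0]
      · rw [hγpos a (not_le.mp h)]
        simp [(hpos a (not_le.mp h)).ne', (not_le.mp h).ne']
    · intro a b ha hb
      rcases ha.eq_or_lt with ha0 | ha0
      · simp [← ha0, hγ0]
      rcases hb.eq_or_lt with hb0 | hb0
      · simp [← hb0, hγ0]
      rw [hγpos a ha0, hγpos b hb0, hγpos _ (by positivity)]
      exact hsub a b ha0 hb0
    · have : ContinuousWithinAt γ (Set.Ici 0) 0 ↔ Tendsto γ (𝓝[Set.Ici (0:ℝ)] 0) (𝓝 0) := by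
        rw [ContinuousWithinAt, hγ0]
      rw [this]
      have hIci : Set.Ici (0:ℝ) = insert 0 (Set.Ioi 0) := by
        rw [Set.Ioi_insert]
      rw [hIci, nhdsWithin_insert, tendsto_sup]
      constructor
      · simpa [hγ0] using (tendsto_pure_nhds γ 0)
      · refine Tendsto.congr' ?_ hlim
        filter_upwards [self_mem_nhdsWithin] with t ht
        exact (hγpos t ht).symm
    · intro a b ha hab
      rcases ha.eq_or_lt with ha0 | ha0
      · rw [← ha0, hγ0]; exact hnonneg b (ha.trans hab)
      · rw [hγpos a ha0, hγpos b (ha0.trans_le hab)]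
        exact hmono a b ha0 hab
  · intro A _ x hψA
    obtain ⟨C, hC, δ, hδ, hCδ⟩ := hbdd
    unfold IsGammaDensityPt
    have hg : Tendsto (fun h : ℝ => C * 2 * h * (mInt A x h / (2 * h * ψ (2 * h))))
        (𝓝[>] (0:ℝ)) (𝓝 0) := by
      have h1 : Tendsto (fun h : ℝ => C * 2 * h) (𝓝[>] (0:ℝ)) (𝓝 0) := by
        have := (tendsto_id.const_mul (C * 2)).mono_left
          (nhdsWithin_le_nhds : 𝓝[>] (0:ℝ) ≤ 𝓝 0)
        simpa using this
      simpa using h1.mul hψA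
    refine squeeze_zero' ?_ ?_ hg
    · filter_upwards [self_mem_nhdsWithin] with h hh
      have hh0 : (0:ℝ) < h := hh
      exact div_nonneg (hnonneg _ (mInt_nonneg A x h)) (hnonneg _ (by positivity))
    · filter_upwards [self_mem_nhdsWithin, Ioo_mem_nhdsGT_of_mem
        (Set.mem_Ico.mpr ⟨le_refl (0:ℝ), half_pos hδ⟩)] with h hh hh2
      have hh0 : 0 < h := hh
      have hhδ : h < δ / 2 := hh2.2
      set m := mInt A x h with hm
      have hm0 : 0 ≤ m := mInt_nonneg A x h
      have hmle : m ≤ 2 * h := mInt_le A x h hh0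
      have hmδ : m < δ := hmle.trans_lt (by linarith)
      have hψ2h : 0 < ψ (2 * h) := hpos _ (by positivity)
      have hγ2h : γ (2 * h) = ψ (2 * h) := hγpos _ (by positivity)
      have hγm : γ m ≤ C * m := by
        rcases hm0.eq_or_lt with h0 | h0
        · rw [← h0, hγ0]; simp
        · rw [hγpos m h0]; exact hCδ m h0 hmδ
      have key : C * 2 * h * (m / (2 * h * ψ (2 * h))) = (C * m) / ψ (2 * h) := by
        field_simp
      rw [hγ2h, key]
      gcongr
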